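/- For all integers n ≥ 0 and k ≥ 0, the number of words in [k]^n avoiding the generalized pattern 21-1 equals the number of words in [k]^n avoiding the generalized pattern 21-2 (i.e., the patterns 21-1 and 21-2 are Wilf-equivalent). -/

import Mathlib

/-- The `i`-th letter (1-based value in `{1,…,k}`) of a word `w ∈ [k]^n`,
with value `0` outside the word. -/
def letter {n k : ℕ} (w : Fin n → Fin k) (i : ℕ) : ℕ :=
  if h : i < n then (w ⟨i, h⟩ : ℕ) + 1 else 0

/-- `w` avoids the generalized pattern 21-1: there are no 0-based indices
`i, j` with `i + 2 ≤ j < n` such that `w i > w (i+1)` and `w j = w (i+1)`. -/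
def Avoids21d1 {n k : ℕ} (w : Fin n → Fin k) : Prop :=
  ∀ i j : ℕ, i + 2 ≤ j → j < n →
    ¬ (letter w (i + 1) < letter w i ∧ letter w j = letter w (i + 1))

/-- `w` avoids the generalized pattern 21-2: there are no 0-based indices
`i, j` with `i + 2 ≤ j < n` such that `w i > w (i+1)` and `w j = w i`. -/
def Avoids21d2 {n k : ℕ} (w : Fin n → Fin k) : Prop :=
  ∀ i j : ℕ, i + 2 ≤ j → j < n →
    ¬ (letter w (i + 1) < letter w i ∧ letter w j = letter w i)


open Finset

/-- Machine step: at previous letter `a`, reading `b`: if `b < a` (a descent),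
the "victim" dies: `b` itself for machine `true` (pattern 21-1),
the previous letter `a` for machine `false` (pattern 21-2). -/
def mstep {k : ℕ} (wh : Bool) (D : Finset (Fin k)) (a b : Fin k) : Finset (Fin k) :=
  if b < a then insert (if wh then b else a) D else D

def mvalid {k : ℕ} (wh : Bool) : Finset (Fin k) → Option (Fin k) → List (Fin k) → Bool
  | _, _, [] => true
  | D, a, b :: t =>
      decide (b ∉ D) &&
        mvalid wh (match a with | none => D | some a₀ => mstep wh D a₀ b) (some b) t

def uof {k : ℕ} (D : Finset (Fin k)) : Option (Fin k) → ℕ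
  | none => Dᶜ.card
  | some a => (Dᶜ.filter (fun x => a ≤ x)).card

def G : ℕ → ℕ → ℕ → ℕ
  | 0, _, _ => 1
  | m+1, s, u => (∑ j ∈ Finset.Icc 1 u, G m s j) + (∑ j ∈ Finset.Ico u s, G m (s-1) j)

lemma sum_rank {k : ℕ} (F : ℕ → ℕ) (S : Finset (Fin k)) :
    ∑ b ∈ S, F ((S.filter (fun x => b ≤ x)).card) = ∑ j ∈ Finset.Icc 1 S.card, F j := by
  obtain ⟨n, hn⟩ : ∃ n, S.card = n := ⟨_, rfl⟩
  induction n generalizing S with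
  | zero =>
      rw [Finset.card_eq_zero] at hn; subst hn; simp
  | succ n ih =>
      have hne : S.Nonempty := by rw [← Finset.card_pos, hn]; omega
      set b₀ := S.min' hne with hb₀
      have hmem : b₀ ∈ S := S.min'_mem hne
      have h1 : S.filter (fun x => b₀ ≤ x) = S :=
        Finset.filter_eq_self.mpr (fun x hx => S.min'_le x hx)
      have h2 : ∀ b ∈ S.erase b₀, S.filter (fun x => b ≤ x)
          = (S.erase b₀).filter (fun x => b ≤ x) := by
        intro b hb
        have hb₀b : b₀ < b := lt_of_le_of_ne (S.min'_le b (Finset.mem_of_mem_erase hb))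
          (Ne.symm (Finset.ne_of_mem_erase hb))
        rw [Finset.filter_erase, Finset.erase_eq_of_notMem]
        simp only [Finset.mem_filter]
        exact fun h => absurd h.2 (not_le.mpr hb₀b)
      have hcard : (S.erase b₀).card = n := by
        have := Finset.card_erase_of_mem hmem; omega
      rw [← Finset.add_sum_erase _ _ hmem, h1, hn,
        Finset.sum_congr rfl (fun b hb => by rw [h2 b hb]),
        ih _ hcard, hcard, Finset.sum_Icc_succ_top (by omega : 1 ≤ n + 1)]
      ring

lemma sum_shift (F : ℕ → ℕ) (u d : ℕ) :
    ∑ j ∈ Finset.Icc 1 d, F (u + j - 1) = ∑ j ∈ Finset.Ico u (u + d), F j := by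
  induction d with
  | zero => simp
  | succ d ih =>
      rw [Finset.sum_Icc_succ_top (by omega : 1 ≤ d + 1), ih,
        show u + (d+1) = (u+d) + 1 from rfl,
        Finset.sum_Ico_succ_top (by omega : u ≤ u + d),
        show u + d + 1 - 1 = u + d from rfl]

def consEquiv {β : Type*} {m : ℕ} (P : (Fin (m+1) → β) → Prop) :
    {w : Fin (m+1) → β // P w} ≃ Σ b : β, {t : Fin m → β // P (Fin.cons b t)} where
  toFun w := ⟨w.1 0, Fin.tail w.1, by
    have : Fin.cons (w.1 0) (Fin.tail w.1) = w.1 := Fin.cons_self_tail w.1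
    rw [this]; exact w.2⟩
  invFun p := ⟨Fin.cons p.1 p.2.1, p.2.2⟩
  left_inv w := Subtype.ext (Fin.cons_self_tail w.1)
  right_inv p := by
    rfl

lemma ofFn_cons {β : Type*} {m : ℕ} (b : β) (t : Fin m → β) :
    List.ofFn (Fin.cons b t) = b :: List.ofFn t := by
  rw [List.ofFn_succ]
  simp [Fin.cons_succ]

lemma count_eq {k : ℕ} (wh : Bool) :
    ∀ (m : ℕ) (D : Finset (Fin k)) (a : Option (Fin k)),
      (wh = false → ∀ a₀ ∈ a, a₀ ∉ D) →
      Fintype.card {w : Fin m → Fin k // mvalid wh D a (List.ofFn w) = true}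
        = G m Dᶜ.card (uof D a) := by
  intro m
  induction m with
  | zero =>
      intro D a _
      have h : ∀ w : Fin 0 → Fin k, mvalid wh D a (List.ofFn w) = true := by
        intro w; rw [List.ofFn_zero]; rfl
      rw [Fintype.card_subtype]
      have h0 : mvalid wh D a ([] : List (Fin k)) = true := rfl
      simp [h, h0, G]
  | succ m IH =>
      intro D a hInv
      rw [Fintype.card_congr (consEquiv _), Fintype.card_sigma]
      rcases a with _ | a₀
      · -- previous letter: none (start of word)
        have hstep : ∀ (b : Fin k) (t : Fin m → Fin k),
            mvalid wh D none (List.ofFn (Fin.cons b t))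
              = (decide (b ∉ D) && mvalid wh D (some b) (List.ofFn t)) := by
          intro b t; rw [ofFn_cons]; rfl
        have hcard : ∀ b : Fin k,
            Fintype.card {t : Fin m → Fin k //
                mvalid wh D none (List.ofFn (Fin.cons b t)) = true}
              = if b ∈ D then 0 else G m Dᶜ.card (uof D (some b)) := by
          intro b
          by_cases hb : b ∈ D
          · rw [if_pos hb]
            refine Fintype.card_eq_zero_iff.mpr ⟨fun t => ?_⟩
            have := t.2; rw [hstep] at this; simp [hb] at this
          · rw [if_neg hb]
            rw [Fintype.card_congr (Equiv.subtypeEquivRight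
              (q := fun t => mvalid wh D (some b) (List.ofFn t) = true) (fun t => by
              rw [hstep]; simp [hb]))]
            exact IH D (some b) (fun _ x hx => by
              rw [Option.mem_def, Option.some.injEq] at hx
              exact hx ▸ hb)
        rw [Finset.sum_congr rfl (fun b _ => hcard b)]
        rw [← Finset.sum_add_sum_compl D]
        rw [Finset.sum_congr rfl (fun b hb => if_pos hb), Finset.sum_const_zero, zero_add]
        rw [Finset.sum_congr rfl (fun b hb => if_neg (Finset.mem_compl.mp hb))]
        have := sum_rank (fun j => G m Dᶜ.card j) Dᶜ
        rw [show (uof D : Option (Fin k) → ℕ) = uof D from rfl]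
        calc ∑ b ∈ Dᶜ, G m Dᶜ.card (uof D (some b))
            = ∑ j ∈ Finset.Icc 1 Dᶜ.card, G m Dᶜ.card j := this
          _ = G (m+1) Dᶜ.card (uof D none) := by
              show _ = G (m+1) Dᶜ.card Dᶜ.card
              simp [G, Finset.Ico_self]
      · -- previous letter: some a₀
        have hstep : ∀ (b : Fin k) (t : Fin m → Fin k),
            mvalid wh D (some a₀) (List.ofFn (Fin.cons b t))
              = (decide (b ∉ D) && mvalid wh (mstep wh D a₀ b) (some b) (List.ofFn t)) := by
          intro b t; rw [ofFn_cons]; rfl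
        set U := Dᶜ.filter (fun x => a₀ ≤ x) with hU
        set L := Dᶜ.filter (fun x => ¬ a₀ ≤ x) with hL
        have hud : U.card + L.card = Dᶜ.card :=
          Finset.card_filter_add_card_filter_not _
        have huof : uof D (some a₀) = U.card := rfl
        have hcard : ∀ b : Fin k,
            Fintype.card {t : Fin m → Fin k //
                mvalid wh D (some a₀) (List.ofFn (Fin.cons b t)) = true}
              = if b ∈ D then 0 else
                  (if a₀ ≤ b then G m Dᶜ.card (uof D (some b))
                   else G m (Dᶜ.card - 1)
                     (U.card + (L.filter (fun x => b ≤ x)).card - 1)) := by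
          intro b
          by_cases hb : b ∈ D
          · rw [if_pos hb]
            refine Fintype.card_eq_zero_iff.mpr ⟨fun t => ?_⟩
            have := t.2; rw [hstep] at this; simp [hb] at this
          · rw [if_neg hb]
            by_cases hab : a₀ ≤ b
            · rw [if_pos hab]
              have hms : mstep wh D a₀ b = D := if_neg (not_lt.mpr hab)
              rw [Fintype.card_congr (Equiv.subtypeEquivRight
                (q := fun t => mvalid wh D (some b) (List.ofFn t) = true) (fun t => by
                rw [hstep, hms]; simp [hb]))]
              exact IH D (some b) (fun _ x hx => by
                rw [Option.mem_def, Option.some.injEq] at hx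
                exact hx ▸ hb)
            · rw [if_neg hab]
              have hblt : b < a₀ := not_le.mp hab
              set c := if wh then b else a₀ with hc
              have hcD : c ∉ D := by
                cases wh
                · simpa [hc] using hInv rfl a₀ rfl
                · simpa [hc] using hb
              have hbc : b ≤ c := by
                cases wh
                · simp only [hc, if_false, Bool.false_eq_true]
                  exact le_of_lt hblt
                · simp [hc]
              have hms : mstep wh D a₀ b = insert c D := if_pos hblt
              have hcmem : c ∈ Dᶜ := Finset.mem_compl.mpr hcD
              have hcompl : (insert c D)ᶜ = Dᶜ.erase c := by
                ext x
                simp only [Finset.mem_compl, Finset.mem_insert, Finset.mem_erase]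
                tauto
              have hscard : (insert c D)ᶜ.card = Dᶜ.card - 1 := by
                rw [hcompl, Finset.card_erase_of_mem hcmem]
              have hcfil : c ∈ Dᶜ.filter (fun x => b ≤ x) :=
                Finset.mem_filter.mpr ⟨hcmem, hbc⟩
              have hufil : uof (insert c D) (some b)
                  = (Dᶜ.filter (fun x => b ≤ x)).card - 1 := by
                show ((insert c D)ᶜ.filter (fun x => b ≤ x)).card = _
                rw [hcompl, Finset.filter_erase, Finset.card_erase_of_mem hcfil]
              have hsplit : (Dᶜ.filter (fun x => b ≤ x)).card
                  = U.card + (L.filter (fun x => b ≤ x)).card := by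
                have heq : Dᶜ.filter (fun x => b ≤ x)
                    = U ∪ L.filter (fun x => b ≤ x) := by
                  ext x
                  simp only [hU, hL, Finset.mem_filter, Finset.mem_union]
                  constructor
                  · rintro ⟨hx, hbx⟩
                    by_cases hax : a₀ ≤ x
                    · exact Or.inl ⟨hx, hax⟩
                    · exact Or.inr ⟨⟨hx, hax⟩, hbx⟩
                  · rintro (⟨hx, hax⟩ | ⟨⟨hx, _⟩, hbx⟩)
                    · exact ⟨hx, le_of_lt (lt_of_lt_of_le hblt hax)⟩
                    · exact ⟨hx, hbx⟩
                have hdisj : Disjoint U (L.filter (fun x => b ≤ x)) := by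
                  rw [Finset.disjoint_left]
                  intro x hxU hxL
                  rw [hU, Finset.mem_filter] at hxU
                  rw [hL, Finset.mem_filter, Finset.mem_filter] at hxL
                  exact hxL.1.2 hxU.2
                rw [heq, Finset.card_union_of_disjoint hdisj]
              rw [Fintype.card_congr (Equiv.subtypeEquivRight
                (q := fun t => mvalid wh (insert c D) (some b) (List.ofFn t) = true)
                (fun t => by rw [hstep, hms]; simp [hb]))]
              rw [IH (insert c D) (some b) (fun hwh x hx => by
                rw [Option.mem_def, Option.some.injEq] at hx
                subst hx
                rw [Finset.mem_insert]
                push_neg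
                refine ⟨?_, hb⟩
                have hca : c = a₀ := by
                  rw [hc, if_neg (by rw [hwh]; simp)]
                rw [hca]; exact ne_of_lt hblt)]
              rw [hscard, hufil, hsplit]
        rw [Finset.sum_congr rfl (fun b _ => hcard b)]
        rw [← Finset.sum_add_sum_compl D]
        rw [Finset.sum_congr rfl (fun b hb => if_pos hb), Finset.sum_const_zero, zero_add]
        rw [Finset.sum_congr rfl (fun b hb => if_neg (Finset.mem_compl.mp hb))]
        rw [← Finset.sum_filter_add_sum_filter_not Dᶜ (fun b => a₀ ≤ b), ← hU, ← hL]
        have hupsum : ∑ b ∈ U, (if a₀ ≤ b then G m Dᶜ.card (uof D (some b))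
              else G m (Dᶜ.card - 1) (U.card + (L.filter (fun x => b ≤ x)).card - 1))
            = ∑ j ∈ Finset.Icc 1 U.card, G m Dᶜ.card j := by
          have h1 : ∀ b ∈ U, (if a₀ ≤ b then G m Dᶜ.card (uof D (some b))
              else G m (Dᶜ.card - 1) (U.card + (L.filter (fun x => b ≤ x)).card - 1))
              = G m Dᶜ.card ((U.filter (fun x => b ≤ x)).card) := by
            intro b hb
            rw [if_pos (Finset.mem_filter.mp hb).2]
            show G m Dᶜ.card ((Dᶜ.filter (fun x => b ≤ x)).card)
              = G m Dᶜ.card ((U.filter (fun x => b ≤ x)).card)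
            have heq : Dᶜ.filter (fun x => b ≤ x) = U.filter (fun x => b ≤ x) := by
              ext x
              simp only [hU, Finset.mem_filter]
              constructor
              · rintro ⟨hx, hbx⟩
                exact ⟨⟨hx, le_trans (Finset.mem_filter.mp hb).2 hbx⟩, hbx⟩
              · rintro ⟨⟨hx, _⟩, hbx⟩
                exact ⟨hx, hbx⟩
            rw [heq]
          rw [Finset.sum_congr rfl h1]
          exact sum_rank (fun j => G m Dᶜ.card j) U
        have hdownsum : ∑ b ∈ L, (if a₀ ≤ b then G m Dᶜ.card (uof D (some b))
              else G m (Dᶜ.card - 1) (U.card + (L.filter (fun x => b ≤ x)).card - 1))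
            = ∑ j ∈ Finset.Ico U.card Dᶜ.card, G m (Dᶜ.card - 1) j := by
          rw [Finset.sum_congr rfl (fun b hb => if_neg (Finset.mem_filter.mp hb).2)]
          rw [sum_rank (fun j => G m (Dᶜ.card - 1) (U.card + j - 1)) L]
          rw [sum_shift (fun j => G m (Dᶜ.card - 1) j) U.card L.card]
          rw [hud]
        rw [hupsum, hdownsum, huof]
        rfl

/-- The letter killed by a descent `a > b`: the bottom `b` for machine `true`
(pattern 21-1), the top `a` for machine `false` (pattern 21-2). -/
def vic {k : ℕ} (wh : Bool) (a b : Fin k) : Fin k := if wh then b else a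

def bnd {k : ℕ} (wh : Bool) (a : Option (Fin k)) : List (Fin k) → Prop
  | [] => True
  | b :: t => ∀ a₀ ∈ a, b < a₀ → vic wh a₀ b ∉ t

def avL {k : ℕ} (wh : Bool) : List (Fin k) → Prop
  | [] => True
  | b :: t => avL wh t ∧ bnd wh (some b) t

lemma mvalid_iff {k : ℕ} (wh : Bool) :
    ∀ (l : List (Fin k)) (D : Finset (Fin k)) (a : Option (Fin k)),
      mvalid wh D a l = true ↔ ((∀ x ∈ l, x ∉ D) ∧ bnd wh a l ∧ avL wh l) := by
  intro l
  induction l with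
  | nil => intro D a; simp [mvalid, bnd, avL]
  | cons b t ih =>
      intro D a
      rcases a with _ | a₀
      · have hl : mvalid wh D none (b :: t) = true ↔
            (b ∉ D ∧ mvalid wh D (some b) t = true) := by
          show (decide (b ∉ D) && mvalid wh D (some b) t) = true ↔ _
          rw [Bool.and_eq_true, decide_eq_true_iff]
        rw [hl, ih]
        constructor
        · rintro ⟨hb, hD, hbnd, hav⟩
          refine ⟨?_, ?_, hav, hbnd⟩
          · intro x hx
            rcases List.mem_cons.mp hx with rfl | hx
            · exact hb
            · exact hD x hx
          · intro a₀ ha₀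
            exact absurd ha₀ (by simp)
        · rintro ⟨hD, _, hav, hbnd⟩
          exact ⟨hD b (List.mem_cons_self),
            fun x hx => hD x (List.mem_cons_of_mem _ hx), hbnd, hav⟩
      · have hl : mvalid wh D (some a₀) (b :: t) = true ↔
            (b ∉ D ∧ mvalid wh (mstep wh D a₀ b) (some b) t = true) := by
          show (decide (b ∉ D) && mvalid wh (mstep wh D a₀ b) (some b) t) = true ↔ _
          rw [Bool.and_eq_true, decide_eq_true_iff]
        rw [hl, ih]
        by_cases hlt : b < a₀
        · have hms : mstep wh D a₀ b = insert (vic wh a₀ b) D := if_pos hlt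
          rw [hms]
          constructor
          · rintro ⟨hb, hD', hbnd, hav⟩
            refine ⟨?_, ?_, hav, hbnd⟩
            · intro x hx
              rcases List.mem_cons.mp hx with rfl | hx
              · exact hb
              · exact fun hxD => hD' x hx (Finset.mem_insert.mpr (Or.inr hxD))
            · intro c hc hlt' hmem
              rw [Option.mem_def, Option.some.injEq] at hc
              subst hc
              exact hD' _ hmem (Finset.mem_insert.mpr (Or.inl rfl))
          · rintro ⟨hD, hbndA, hav, hbnd⟩
            refine ⟨hD b (List.mem_cons_self), ?_, hbnd, hav⟩
            intro x hx hins
            rcases Finset.mem_insert.mp hins with rfl | hxD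
            · exact hbndA a₀ rfl hlt hx
            · exact hD x (List.mem_cons_of_mem _ hx) hxD
        · have hms : mstep wh D a₀ b = D := if_neg hlt
          rw [hms]
          constructor
          · rintro ⟨hb, hD, hbnd, hav⟩
            refine ⟨?_, ?_, hav, hbnd⟩
            · intro x hx
              rcases List.mem_cons.mp hx with rfl | hx
              · exact hb
              · exact hD x hx
            · intro c hc hlt'
              rw [Option.mem_def, Option.some.injEq] at hc
              subst hc
              exact absurd hlt' hlt
          · rintro ⟨hD, _, hav, hbnd⟩
            exact ⟨hD b (List.mem_cons_self),
              fun x hx => hD x (List.mem_cons_of_mem _ hx), hbnd, hav⟩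

lemma bnd_none {k : ℕ} (wh : Bool) (l : List (Fin k)) : bnd wh none l := by
  cases l with
  | nil => trivial
  | cons b t => intro a₀ ha₀; simp at ha₀

lemma mvalid_iff' {k : ℕ} (wh : Bool) (l : List (Fin k)) :
    mvalid wh ∅ none l = true ↔ avL wh l := by
  rw [mvalid_iff]
  simp [bnd_none]

def idx {k : ℕ} (wh : Bool) (l : List (Fin k)) : Prop :=
  ∀ (i j : ℕ) (h1 : i + 1 < l.length) (hj : j < l.length), i + 2 ≤ j →
    ¬ (l[i+1]'h1 < l[i]'(by omega) ∧
       l[j]'hj = (if wh then l[i+1]'h1 else l[i]'(by omega)))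

lemma avL_iff_idx {k : ℕ} (wh : Bool) :
    ∀ l : List (Fin k), avL wh l ↔ idx wh l := by
  intro l
  induction l with
  | nil =>
      simp only [avL, idx, List.length_nil, iff_true_intro trivial, true_iff]
      intro i j h1 hj h2
      omega
  | cons b t ih =>
      show (avL wh t ∧ bnd wh (some b) t) ↔ _
      rw [ih]
      constructor
      · rintro ⟨hav, hbnd⟩
        intro i j h1 hj h2
        obtain ⟨j', rfl⟩ : ∃ j', j = j' + 1 := ⟨j - 1, by omega⟩
        cases i with
        | zero =>
            cases t with
            | nil => simp at h1
            | cons c t' =>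
                rintro ⟨hlt, heq⟩
                obtain ⟨j'', rfl⟩ : ∃ j'', j' = j'' + 1 := ⟨j' - 1, by omega⟩
                simp only [List.getElem_cons_succ, List.getElem_cons_zero] at hlt heq
                have hvic : vic wh b c ∉ t' := hbnd b rfl hlt
                apply hvic
                show (if wh then c else b) ∈ t'
                rw [← heq]
                exact List.getElem_mem _
        | succ i' =>
            rintro ⟨hlt, heq⟩
            simp only [List.getElem_cons_succ] at hlt heq
            have h1' : i' + 1 < t.length := by
              simp only [List.length_cons] at h1; omega
            have hj' : j' < t.length := by
              simp only [List.length_cons] at hj; omega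
            exact hav i' j' h1' hj' (by omega) ⟨hlt, heq⟩
      · intro hidx
        constructor
        · intro i j h1 hj h2
          have h1' : (i + 1) + 1 < (b :: t).length := by
            simp only [List.length_cons]; omega
          have hj' : j + 1 < (b :: t).length := by
            simp only [List.length_cons]; omega
          have := hidx (i + 1) (j + 1) h1' hj' (by omega)
          simp only [List.getElem_cons_succ] at this
          exact this
        · cases t with
          | nil => trivial
          | cons c t' =>
              intro a₀ ha₀ hlt hmem
              rw [Option.mem_def, Option.some.injEq] at ha₀
              subst ha₀
              obtain ⟨m, hm, hval⟩ := List.mem_iff_getElem.mp hmem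
              have hmlen : m + 2 < (b :: c :: t').length := by
                simp only [List.length_cons]; omega
              apply hidx 0 (m + 2) (by simp only [List.length_cons]; omega) hmlen (by omega)
              refine ⟨by simpa using hlt, ?_⟩
              simp only [List.getElem_cons_succ, List.getElem_cons_zero]
              rw [hval]
              rfl

lemma idx_ofFn_iff {n k : ℕ} (wh : Bool) (w : Fin n → Fin k) :
    idx wh (List.ofFn w) ↔
      ∀ i j : ℕ, i + 2 ≤ j → j < n →
        ¬ (letter w (i + 1) < letter w i ∧
           letter w j = (if wh then letter w (i + 1) else letter w i)) := by
  constructor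
  · intro h i j h2 hjn hand
    obtain ⟨hlt, heq⟩ := hand
    have h1 : i + 1 < n := by omega
    have hin : i < n := by omega
    have e1 : letter w (i + 1) = (w ⟨i + 1, h1⟩ : ℕ) + 1 := dif_pos h1
    have e2 : letter w i = (w ⟨i, hin⟩ : ℕ) + 1 := dif_pos hin
    have e3 : letter w j = (w ⟨j, hjn⟩ : ℕ) + 1 := dif_pos hjn
    rw [e1, e2] at hlt
    rw [e1, e2, e3] at heq
    have hl1 : i + 1 < (List.ofFn w).length := by rw [List.length_ofFn]; omega
    have hlj : j < (List.ofFn w).length := by rw [List.length_ofFn]; omega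
    apply h i j hl1 hlj h2
    constructor
    · rw [List.getElem_ofFn, List.getElem_ofFn]
      show (w ⟨i + 1, h1⟩ : Fin k) < w ⟨i, hin⟩
      rw [Fin.lt_def]; omega
    · rw [List.getElem_ofFn, List.getElem_ofFn, List.getElem_ofFn]
      show (w ⟨j, hjn⟩ : Fin k) = if wh then w ⟨i + 1, h1⟩ else w ⟨i, hin⟩
      cases wh
      · simp only [if_false, Bool.false_eq_true] at heq ⊢
        exact Fin.ext (by omega)
      · simp only [if_true] at heq ⊢
        exact Fin.ext (by omega)
  · intro h i j h1 hj h2 hand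
    obtain ⟨hlt, heq⟩ := hand
    rw [List.length_ofFn] at h1 hj
    have hin : i < n := by omega
    have e1 : letter w (i + 1) = (w ⟨i + 1, h1⟩ : ℕ) + 1 := dif_pos h1
    have e2 : letter w i = (w ⟨i, hin⟩ : ℕ) + 1 := dif_pos hin
    have e3 : letter w j = (w ⟨j, hj⟩ : ℕ) + 1 := dif_pos hj
    rw [List.getElem_ofFn, List.getElem_ofFn] at hlt
    rw [List.getElem_ofFn, List.getElem_ofFn, List.getElem_ofFn] at heq
    have hlt' : (w ⟨i + 1, h1⟩ : Fin k) < w ⟨i, hin⟩ := hlt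
    have heq' : (w ⟨j, hj⟩ : Fin k) = if wh then w ⟨i + 1, h1⟩ else w ⟨i, hin⟩ := heq
    rw [Fin.lt_def] at hlt'
    apply h i j h2 hj
    refine ⟨by rw [e1, e2]; omega, ?_⟩
    rw [e3]
    cases wh
    · simp only [if_false, Bool.false_eq_true] at heq' ⊢
      rw [e2, heq']
    · simp only [if_true] at heq' ⊢
      rw [e1, heq']

lemma mvalid_iff_avoids1 {n k : ℕ} (w : Fin n → Fin k) :
    mvalid true ∅ none (List.ofFn w) = true ↔ Avoids21d1 w := by
  rw [mvalid_iff', avL_iff_idx, idx_ofFn_iff]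
  unfold Avoids21d1
  simp only [if_true]

lemma mvalid_iff_avoids2 {n k : ℕ} (w : Fin n → Fin k) :
    mvalid false ∅ none (List.ofFn w) = true ↔ Avoids21d2 w := by
  rw [mvalid_iff', avL_iff_idx, idx_ofFn_iff]
  unfold Avoids21d2
  simp only [if_false, Bool.false_eq_true]

theorem stmt7 (n k : ℕ) :
    Nat.card {w : Fin n → Fin k // Avoids21d1 w} =
      Nat.card {w : Fin n → Fin k // Avoids21d2 w} := by
  have hInv : ∀ wh : Bool, wh = false →
      ∀ a₀ ∈ (none : Option (Fin k)), a₀ ∉ (∅ : Finset (Fin k)) := by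
    intro wh _ x hx
    simp at hx
  have c1 : Nat.card {w : Fin n → Fin k // Avoids21d1 w}
      = G n ((∅ : Finset (Fin k))ᶜ).card (uof (∅ : Finset (Fin k)) none) := by
    rw [Nat.card_congr (Equiv.subtypeEquivRight
      (fun w : Fin n → Fin k => (mvalid_iff_avoids1 w).symm))]
    rw [Nat.card_eq_fintype_card]
    exact count_eq true n ∅ none (hInv true)
  have c2 : Nat.card {w : Fin n → Fin k // Avoids21d2 w}
      = G n ((∅ : Finset (Fin k))ᶜ).card (uof (∅ : Finset (Fin k)) none) := by
    rw [Nat.card_congr (Equiv.subtypeEquivRight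
      (fun w : Fin n → Fin k => (mvalid_iff_avoids2 w).symm))]
    rw [Nat.card_eq_fintype_card]
    exact count_eq false n ∅ none (hInv false)
  rw [c1, c2]
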